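/- Let σ_ρ and σ_∂ be discrete random variables (the root state and leaf states). Suppose D is an event such that conditionally on D, σ_ρ and σ_∂ are independent. Then for any (measurable) reconstruction function f, P[f(σ_∂) = σ_ρ] ≤ P[Dᶜ] + max_i P[σ_ρ = i]. -/
import Mathlib


open Finset
open scoped Classical

/-- if conditionally on an event `D` the root state `σρ` and the leaf
states `σL` are independent (with the law of `σρ` given `D` equal to its prior),
then for any reconstruction function `f`,
`P[f(σL) = σρ] ≤ P[Dᶜ] + max_i P[σρ = i]`. -/
theorem reconstruction_coupling_bound {Ω C S : Type*} [Fintype Ω] [DecidableEq Ω]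
    [Fintype C] [Fintype S] [Nonempty C]
    (P : Ω → ℝ) (hP0 : ∀ ω, 0 ≤ P ω) (hP1 : ∑ ω, P ω = 1)
    (σρ : Ω → C) (σL : Ω → S) (D : Finset Ω)
    (Pr : Finset Ω → ℝ) (hPr : ∀ E, Pr E = ∑ ω ∈ E, P ω)
    (hroot : ∀ i : C,
      Pr (D ∩ univ.filter fun ω => σρ ω = i) =
        Pr (univ.filter fun ω => σρ ω = i) * Pr D)
    (hindep : ∀ (i : C) (s : S),
      Pr (D ∩ univ.filter fun ω => σρ ω = i ∧ σL ω = s) * Pr D =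
        Pr (D ∩ univ.filter fun ω => σρ ω = i) *
          Pr (D ∩ univ.filter fun ω => σL ω = s))
    (f : S → C) :
    Pr (univ.filter fun ω => f (σL ω) = σρ ω) ≤
      Pr Dᶜ + univ.sup' univ_nonempty (fun i : C => Pr (univ.filter fun ω => σρ ω = i)) := by
  set M := univ.sup' univ_nonempty (fun i : C => Pr (univ.filter fun ω => σρ ω = i)) with hM
  set A := univ.filter fun ω => f (σL ω) = σρ ω with hA
  have hPrnn : ∀ E, 0 ≤ Pr E := fun E => by
    rw [hPr]; exact Finset.sum_nonneg fun ω _ => hP0 ω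
  have hPrmono : ∀ {E F : Finset Ω}, E ⊆ F → Pr E ≤ Pr F := by
    intro E F h; rw [hPr, hPr]
    exact Finset.sum_le_sum_of_subset_of_nonneg h (fun ω _ _ => hP0 ω)
  have hMle : ∀ i, Pr (univ.filter fun ω => σρ ω = i) ≤ M :=
    fun i => Finset.le_sup' (fun i : C => Pr (univ.filter fun ω => σρ ω = i)) (mem_univ i)
  have hM0 : 0 ≤ M := le_trans (hPrnn _) (hMle (Classical.arbitrary C))
  have hD1 : Pr D ≤ 1 := by
    rw [hPr, ← hP1]
    exact Finset.sum_le_sum_of_subset_of_nonneg (subset_univ D) (fun ω _ _ => hP0 ω)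
  have hsplit : Pr A = Pr (Dᶜ ∩ A) + Pr (D ∩ A) := by
    rw [hPr, hPr, hPr, ← Finset.sum_union ?_]
    · apply Finset.sum_congr _ (fun _ _ => rfl)
      ext ω
      by_cases h : ω ∈ D <;> simp [Finset.mem_union, h]
    · rw [Finset.disjoint_left]
      intro ω h1 h2
      simp only [Finset.mem_inter, Finset.mem_compl] at h1 h2
      exact h1.1 h2.1
  have key : Pr (D ∩ A) ≤ M := by
    rcases eq_or_lt_of_le (hPrnn D) with hD0 | hDpos
    · exact le_trans (le_trans (hPrmono (Finset.inter_subset_left)) hD0.symm.le) hM0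
    · have hfib : Pr (D ∩ A) =
          ∑ s : S, Pr (D ∩ univ.filter fun ω => σρ ω = f s ∧ σL ω = s) := by
        rw [hPr]
        rw [← Finset.sum_fiberwise (D ∩ A) σL P]
        apply Finset.sum_congr rfl
        intro s _
        rw [hPr]
        apply Finset.sum_congr _ (fun _ _ => rfl)
        ext ω
        simp only [Finset.mem_filter, Finset.mem_inter, hA, Finset.mem_univ, true_and]
        constructor
        · rintro ⟨⟨hωD, hfs⟩, hs⟩
          exact ⟨hωD, by rw [← hs, hfs], hs⟩
        · rintro ⟨hωD, hfs, hs⟩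
          exact ⟨⟨hωD, by rw [hs, hfs]⟩, hs⟩
      have hfibD : ∑ s : S, Pr (D ∩ univ.filter fun ω => σL ω = s) = Pr D := by
        rw [hPr D, ← Finset.sum_fiberwise D σL P]
        apply Finset.sum_congr rfl
        intro s _
        rw [hPr]
        apply Finset.sum_congr _ (fun _ _ => rfl)
        ext ω
        simp [and_comm]
      have hterm : ∀ s : S,
          Pr (D ∩ univ.filter fun ω => σρ ω = f s ∧ σL ω = s) ≤
            M * Pr (D ∩ univ.filter fun ω => σL ω = s) := by
        intro s
        have h1 := hindep (f s) s
        rw [hroot (f s)] at h1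
        have h2 : Pr (D ∩ univ.filter fun ω => σρ ω = f s ∧ σL ω = s) =
            Pr (univ.filter fun ω => σρ ω = f s) *
              Pr (D ∩ univ.filter fun ω => σL ω = s) := by
          apply mul_right_cancel₀ (ne_of_gt hDpos)
          rw [h1]; ring
        rw [h2]
        exact mul_le_mul_of_nonneg_right (hMle (f s)) (hPrnn _)
      calc Pr (D ∩ A) = ∑ s : S, Pr (D ∩ univ.filter fun ω => σρ ω = f s ∧ σL ω = s) := hfib
        _ ≤ ∑ s : S, M * Pr (D ∩ univ.filter fun ω => σL ω = s) :=
            Finset.sum_le_sum fun s _ => hterm s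
        _ = M * Pr D := by rw [← Finset.mul_sum, hfibD]
        _ ≤ M * 1 := mul_le_mul_of_nonneg_left hD1 hM0
        _ = M := mul_one M
  calc Pr A = Pr (Dᶜ ∩ A) + Pr (D ∩ A) := hsplit
    _ ≤ Pr Dᶜ + M :=
        add_le_add (hPrmono Finset.inter_subset_left) key
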